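/- If X ⊆ ℝⁿ is the union of the graphs of finitely many Lipschitz functions ξ₁, …, ξ_k : ℝ^{n-1} → ℝ, then there exist Lipschitz functions θ₁ ≤ θ₂ ≤ … ≤ θ_k : ℝ^{n-1} → ℝ such that X equals the union of the graphs of θ₁, …, θ_k. -/

import Mathlib

open scoped NNReal

section Aux

variable {α ι : Type*} [PseudoEMetricSpace α]

lemma lipschitz_finset_sup' (s : Finset ι) (hs : s.Nonempty) (f : ι → α → ℝ) {N : ℝ≥0}
    (hf : ∀ i ∈ s, LipschitzWith N (f i)) :
    LipschitzWith N (fun x => s.sup' hs (fun i => f i x)) := by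
  induction hs using Finset.Nonempty.cons_induction with
  | singleton i =>
      have : (fun x => ({i} : Finset ι).sup' (Finset.singleton_nonempty i) (fun j => f j x)) = f i := by
        funext x; simp
      rw [this]; exact hf i (by simp)
  | cons i s hi hs ih =>
      simp only [Finset.sup'_cons hs]
      have h1 : LipschitzWith N (f i) := hf i (by simp)
      have h2 := ih (fun j hj => hf j (Finset.mem_cons_of_mem hj))
      simpa using h1.max h2

lemma lipschitz_finset_inf' (s : Finset ι) (hs : s.Nonempty) (f : ι → α → ℝ) {N : ℝ≥0}
    (hf : ∀ i ∈ s, LipschitzWith N (f i)) :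
    LipschitzWith N (fun x => s.inf' hs (fun i => f i x)) := by
  induction hs using Finset.Nonempty.cons_induction with
  | singleton i =>
      have : (fun x => ({i} : Finset ι).inf' (Finset.singleton_nonempty i) (fun j => f j x)) = f i := by
        funext x; simp
      rw [this]; exact hf i (by simp)
  | cons i s hi hs ih =>
      simp only [Finset.inf'_cons hs]
      have h1 : LipschitzWith N (f i) := hf i (by simp)
      have h2 := ih (fun j hj => hf j (Finset.mem_cons_of_mem hj))
      simpa using h1.min h2

end Aux

/-- If X ⊆ ℝⁿ = ℝ^{n-1} × ℝ is a union of graphs of finitely many Lipschitz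
functions ξ₁,…,ξ_k, then it is also the union of graphs of an ordered (pointwise
nondecreasing) family of Lipschitz functions θ₁ ≤ … ≤ θ_k. -/
theorem stmt2 {m k : ℕ} (ξ : Fin k → EuclideanSpace ℝ (Fin m) → ℝ)
    (hξ : ∀ i, ∃ N : ℝ≥0, LipschitzWith N (ξ i)) :
    ∃ θ : Fin k → EuclideanSpace ℝ (Fin m) → ℝ,
      (∀ i, ∃ N : ℝ≥0, LipschitzWith N (θ i)) ∧
      (∀ i j : Fin k, i ≤ j → ∀ x, θ i x ≤ θ j x) ∧
      (⋃ i, {p : EuclideanSpace ℝ (Fin m) × ℝ | p.2 = ξ i p.1}) =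
        (⋃ i, {p : EuclideanSpace ℝ (Fin m) × ℝ | p.2 = θ i p.1}) := by
  classical
  have hcardu : (Finset.univ : Finset (Fin k)).card = k := by simp
  have hP : ∀ i : Fin k, (Finset.powersetCard (i.1 + 1) (Finset.univ : Finset (Fin k))).Nonempty := by
    intro i
    refine Finset.powersetCard_nonempty.2 ?_
    rw [hcardu]; omega
  have hne : ∀ (i : Fin k)
      (s : {s // s ∈ Finset.powersetCard (i.1 + 1) (Finset.univ : Finset (Fin k))}),
      s.1.Nonempty := by
    intro i s
    have := (Finset.mem_powersetCard.1 s.2).2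
    exact Finset.card_pos.1 (by omega)
  set θ : Fin k → EuclideanSpace ℝ (Fin m) → ℝ := fun i x =>
    (Finset.powersetCard (i.1 + 1) (Finset.univ : Finset (Fin k))).attach.inf'
      (Finset.attach_nonempty_iff.2 (hP i))
      (fun s => s.1.sup' (hne i s) (fun j => ξ j x)) with hθ
  refine ⟨θ, ?_, ?_, ?_⟩
  · -- Lipschitz
    intro i
    set N : ℝ≥0 := Finset.univ.sup (fun j : Fin k => (hξ j).choose) with hN
    have hlip : ∀ j : Fin k, LipschitzWith N (ξ j) := fun j =>
      ((hξ j).choose_spec).weaken (Finset.le_sup (f := fun j : Fin k => (hξ j).choose) (Finset.mem_univ j))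
    exact ⟨N, lipschitz_finset_inf' _ _ _ (fun s _ =>
      lipschitz_finset_sup' _ _ _ (fun j _ => hlip j))⟩
  · -- monotone
    intro i j hij x
    apply Finset.le_inf'
    intro s hs
    obtain ⟨hs1, hs2⟩ := Finset.mem_powersetCard.1 s.2
    obtain ⟨t, ht, htc⟩ := Finset.exists_subset_card_eq (s := s.1) (n := i.1 + 1)
      (by rw [hs2]; exact Nat.add_le_add_right hij 1)
    have hts : t ∈ Finset.powersetCard (i.1 + 1) (Finset.univ : Finset (Fin k)) :=
      Finset.mem_powersetCard.2 ⟨ht.trans hs1, htc⟩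
    refine le_trans (Finset.inf'_le _ (Finset.mem_attach _ ⟨t, hts⟩)) ?_
    apply Finset.sup'_le
    intro l hl
    exact Finset.le_sup' (fun j => ξ j x) (ht hl)
  · -- union of graphs equal
    ext p
    simp only [Set.mem_iUnion, Set.mem_setOf_eq]
    set x := p.1
    constructor
    · rintro ⟨j, hj⟩
      set c : ℝ := ξ j x with hc
      set S : Finset (Fin k) := Finset.univ.filter (fun l => ξ l x ≤ c) with hS
      have hjS : j ∈ S := by simp [hS, hc]
      have hS1 : 1 ≤ S.card := Finset.card_pos.2 ⟨j, hjS⟩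
      have hSk : S.card ≤ k := by
        simpa using Finset.card_le_univ S
      refine ⟨⟨S.card - 1, by omega⟩, ?_⟩
      have hScard : S.card - 1 + 1 = S.card := by omega
      have hSmem : S ∈ Finset.powersetCard (S.card - 1 + 1) (Finset.univ : Finset (Fin k)) :=
        Finset.mem_powersetCard.2 ⟨Finset.subset_univ S, hScard.symm ▸ rfl⟩
      have hle : θ ⟨S.card - 1, by omega⟩ x ≤ c := by
        refine le_trans (Finset.inf'_le _ (Finset.mem_attach _ ⟨S, hSmem⟩)) ?_
        apply Finset.sup'_le
        intro l hl
        exact (Finset.mem_filter.1 hl).2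
      have hge : c ≤ θ ⟨S.card - 1, by omega⟩ x := by
        apply Finset.le_inf'
        intro s hs
        obtain ⟨hs1, hs2⟩ := Finset.mem_powersetCard.1 s.2
        have hs2' : s.1.card = S.card - 1 + 1 := hs2
        set T : Finset (Fin k) := Finset.univ.filter (fun l => ξ l x < c) with hT
        have hTS : T ⊆ S.erase j := by
          intro l hl
          have hl' := (Finset.mem_filter.1 hl).2
          refine Finset.mem_erase.2 ⟨?_, by simp [hS, le_of_lt hl']⟩
          rintro rfl; exact absurd hl' (lt_irrefl _)
        have hTcard : T.card ≤ S.card - 1 := by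
          have := Finset.card_le_card hTS
          rw [Finset.card_erase_of_mem hjS] at this
          exact this
        have : ¬ s.1 ⊆ T := by
          intro hsub
          have := Finset.card_le_card hsub
          rw [hs2'] at this
          omega
        obtain ⟨l, hls, hlT⟩ := Finset.not_subset.1 this
        have hcl : c ≤ ξ l x := by
          by_contra h
          exact hlT (Finset.mem_filter.2 ⟨Finset.mem_univ l, not_le.1 h⟩)
        exact hcl.trans (Finset.le_sup' (fun j => ξ j x) hls)
      rw [hj]
      exact le_antisymm hge hle
    · rintro ⟨i, hi⟩
      obtain ⟨s, hs, hseq⟩ := Finset.exists_mem_eq_inf'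
        (Finset.attach_nonempty_iff.2 (hP i))
        (fun s => s.1.sup' (hne i s) (fun j => ξ j x))
      obtain ⟨j, hjs, hjeq⟩ := Finset.exists_mem_eq_sup' (hne i s) (fun j => ξ j x)
      exact ⟨j, by rw [hi, hθ]; simp only; rw [hseq, hjeq]⟩
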